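/- Let (x_n) be a DR sequence (with the tie convention) with respect to (A, B = {b_1, b_2}). Suppose β + β_2 ≥ 0 and x_1 satisfies either (x_1 = ⟨x_0, u⟩u + b_1 and ⟨x_1, u⟩ ∈ (β, β + β_2]) or (x_1 = ⟨x_0, u⟩u + b_2 and ⟨x_1, u⟩ ∈ (β + β_2, β − β_1 + β_2]). Then for every n ≥ 1: ⟨x_n, u⟩ = ⟨x_0, u⟩ + n·β_1 + ⌊(−⟨x_0, u⟩ + β − (n+1)β_1 + β_2)/(β_2 − β_1)⌋·(β_2 − β_1), and x_n = ⟨x_{n−1}, u⟩u + b_{k(n)}, where k(n) = ⌊(−⟨x_0, u⟩ + β − (n+1)β_1 + β_2)/(β_2 − β_1)⌋ − ⌊(−⟨x_0, u⟩ + β − n·β_1 + β_2)/(β_2 − β_1)⌋ + 1 ∈ {1, 2}. -/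

import Mathlib

open Filter
open scoped RealInnerProductSpace

lemma dr_aux_sq {X : Type*} [NormedAddCommGroup X] [InnerProductSpace ℝ X]
    (u : X) (hu : ‖u‖ = 1) (v : X) (s : ℝ) :
    ‖v - s • u‖ ^ 2 = ‖v‖ ^ 2 - 2 * s * ⟪v, u⟫ + s ^ 2 := by
  rw [@norm_sub_sq_real, real_inner_smul_right, norm_smul]
  simp [hu]
  ring

set_option maxHeartbeats 3200000 in
/-- closed-form expressions: For a DR sequence (with the tie convention
choosing `b₂`) with respect to the hyperplane `A = {u}ᗮ` and `B = {b₁, b₂}`, if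
`β + β₂ ≥ 0` and `x 1 ∈ S₁ ∪ S₂`, then for all `n ≥ 1`:
`⟪x n, u⟫ = ⟪x 0, u⟫ + n β₁ + ⌊(-⟪x 0,u⟫ + β - (n+1)β₁ + β₂)/(β₂ - β₁)⌋ (β₂ - β₁)` and
`x n = ⟪x (n-1), u⟫ • u + b_{k(n)}` with
`k(n) = ⌊(-⟪x 0,u⟫ + β - (n+1)β₁ + β₂)/(β₂-β₁)⌋ - ⌊(-⟪x 0,u⟫ + β - nβ₁ + β₂)/(β₂-β₁)⌋ + 1`
belonging to `{1, 2}`. -/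
theorem dr_hyperplane_doubleton_stmt_15
    {X : Type*} [NormedAddCommGroup X] [InnerProductSpace ℝ X] [FiniteDimensional ℝ X]
    (u : X) (hu : ‖u‖ = 1)
    (b₁ b₂ : X) (hb₁ : ⟪b₁, u⟫ < 0) (hb₂ : 0 < ⟪b₂, u⟫)
    (β₁ β₂ β : ℝ) (hβ₁ : β₁ = ⟪b₁, u⟫) (hβ₂ : β₂ = ⟪b₂, u⟫)
    (hβ : β = -‖b₁ - b₂‖ ^ 2 / (2 * ⟪b₂ - b₁, u⟫))
    (x : ℕ → X)
    (hx : ∀ n : ℕ,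
      (‖(x n - (2 * ⟪x n, u⟫) • u) - b₁‖ < ‖(x n - (2 * ⟪x n, u⟫) • u) - b₂‖ →
        x (n + 1) = ⟪x n, u⟫ • u + b₁) ∧
      (‖(x n - (2 * ⟪x n, u⟫) • u) - b₂‖ ≤ ‖(x n - (2 * ⟪x n, u⟫) • u) - b₁‖ →
        x (n + 1) = ⟪x n, u⟫ • u + b₂))
    (hββ₂ : 0 ≤ β + β₂)
    (hx1 : (x 1 = ⟪x 0, u⟫ • u + b₁ ∧ ⟪x 1, u⟫ ∈ Set.Ioc β (β + β₂)) ∨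
      (x 1 = ⟪x 0, u⟫ • u + b₂ ∧ ⟪x 1, u⟫ ∈ Set.Ioc (β + β₂) (β - β₁ + β₂))) :
    ∀ n : ℕ, 1 ≤ n →
      ⟪x n, u⟫ = ⟪x 0, u⟫ + (n : ℝ) * β₁ +
        (⌊(-⟪x 0, u⟫ + β - ((n : ℝ) + 1) * β₁ + β₂) / (β₂ - β₁)⌋ : ℝ) * (β₂ - β₁) ∧
      ∃ k : ℤ,
        k = ⌊(-⟪x 0, u⟫ + β - ((n : ℝ) + 1) * β₁ + β₂) / (β₂ - β₁)⌋ -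
            ⌊(-⟪x 0, u⟫ + β - (n : ℝ) * β₁ + β₂) / (β₂ - β₁)⌋ + 1 ∧
        (k = 1 ∨ k = 2) ∧
        x n = ⟪x (n - 1), u⟫ • u + (if k = 1 then b₁ else b₂) := by
  have huu : ⟪u, u⟫ = (1 : ℝ) := by
    rw [real_inner_self_eq_norm_sq, hu]; norm_num
  set ξ0 : ℝ := ⟪x 0, u⟫ with hξ0
  set D : ℝ := β₂ - β₁ with hDdef
  have hβ₁neg : β₁ < 0 := hβ₁ ▸ hb₁
  have hβ₂pos : 0 < β₂ := hβ₂ ▸ hb₂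
  have hDpos : 0 < D := by rw [hDdef]; linarith
  have hinner21 : ⟪b₂ - b₁, u⟫ = D := by
    rw [inner_sub_left, hDdef, hβ₁, hβ₂]
  have hCS : D ≤ ‖b₁ - b₂‖ := by
    have h := real_inner_le_norm (b₂ - b₁) u
    rw [hinner21, hu, mul_one, norm_sub_rev] at h
    exact h
  have hβprod : β * (2 * D) = -‖b₁ - b₂‖ ^ 2 := by
    rw [hβ, hinner21]
    field_simp
  have hβD : 2 * β ≤ -D := by nlinarith [hDpos, hCS, norm_nonneg (b₁ - b₂)]
  have hβneg : β < 0 := by nlinarith [hDpos]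
  have hsum : 0 ≤ β₁ + β₂ := by
    have : 2 * β ≤ β₁ - β₂ := by rw [hDdef] at hβD; linarith
    linarith
  -- inner product of points of the form η • u + b
  have hx_inner : ∀ (η : ℝ) (b : X), ⟪η • u + b, u⟫ = η + ⟪b, u⟫ := by
    intro η b
    rw [inner_add_left, real_inner_smul_left, huu]; ring
  -- floor characterization
  have fchar : ∀ (n : ℕ) (m : ℤ), ⟪x n, u⟫ = ξ0 + n * β₁ + m * D →
      β < ⟪x n, u⟫ → ⟪x n, u⟫ ≤ β - β₁ + β₂ →
      ⌊(-ξ0 + β - ((n : ℝ) + 1) * β₁ + β₂) / D⌋ = m := by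
    intro n m h1 h2 h3
    rw [Int.floor_eq_iff]
    constructor
    · rw [le_div_iff₀ hDpos]
      rw [hDdef] at h1 ⊢
      linarith
    · rw [div_lt_iff₀ hDpos]
      push_cast
      rw [hDdef] at h1 ⊢
      linarith
  -- choice lemmas
  have choose1 : ∀ (n : ℕ) (η : ℝ), x n = η • u + b₁ →
      ((β - β₁ < ⟪x n, u⟫ → x (n + 1) = ⟪x n, u⟫ • u + b₁) ∧
       (⟪x n, u⟫ ≤ β - β₁ → x (n + 1) = ⟪x n, u⟫ • u + b₂)) := by
    intro n η hxn
    have hinn : ⟪x n, u⟫ = η + β₁ := by rw [hxn, hx_inner, hβ₁]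
    have hrefl : ∀ c : X, x n - (2 * ⟪x n, u⟫) • u - c = (b₁ - c) - (η + 2 * β₁) • u := by
      intro c
      rw [hinn, hxn]
      module
    have e1 : ‖x n - (2 * ⟪x n, u⟫) • u - b₁‖ ^ 2 = (η + 2 * β₁) ^ 2 := by
      rw [hrefl b₁, dr_aux_sq u hu]
      simp
    have e2 : ‖x n - (2 * ⟪x n, u⟫) • u - b₂‖ ^ 2 =
        ‖b₁ - b₂‖ ^ 2 - 2 * (η + 2 * β₁) * ⟪b₁ - b₂, u⟫ + (η + 2 * β₁) ^ 2 := by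
      rw [hrefl b₂, dr_aux_sq u hu]
    have hi12 : ⟪b₁ - b₂, u⟫ = -D := by
      rw [inner_sub_left, hDdef, hβ₁, hβ₂]; ring
    have key : ‖x n - (2 * ⟪x n, u⟫) • u - b₁‖ ^ 2 - ‖x n - (2 * ⟪x n, u⟫) • u - b₂‖ ^ 2
        = 2 * D * (β - (⟪x n, u⟫ + β₁)) := by
      rw [e1, e2, hi12, hinn]
      nlinarith [hβprod]
    constructor
    · intro hlt
      apply (hx n).1
      apply lt_of_pow_lt_pow_left₀ 2 (norm_nonneg _)
      nlinarith [key, hDpos]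
    · intro hle
      apply (hx n).2
      apply le_of_pow_le_pow_left₀ two_ne_zero (norm_nonneg _)
      nlinarith [key, hDpos]
  have choose2 : ∀ (n : ℕ) (η : ℝ), x n = η • u + b₂ →
      (-β - β₂ < ⟪x n, u⟫ → x (n + 1) = ⟪x n, u⟫ • u + b₁) := by
    intro n η hxn hlt
    have hinn : ⟪x n, u⟫ = η + β₂ := by rw [hxn, hx_inner, hβ₂]
    have hrefl : ∀ c : X, x n - (2 * ⟪x n, u⟫) • u - c = (b₂ - c) - (η + 2 * β₂) • u := by
      intro c
      rw [hinn, hxn]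
      module
    have e1 : ‖x n - (2 * ⟪x n, u⟫) • u - b₁‖ ^ 2 =
        ‖b₂ - b₁‖ ^ 2 - 2 * (η + 2 * β₂) * ⟪b₂ - b₁, u⟫ + (η + 2 * β₂) ^ 2 := by
      rw [hrefl b₁, dr_aux_sq u hu]
    have e2 : ‖x n - (2 * ⟪x n, u⟫) • u - b₂‖ ^ 2 = (η + 2 * β₂) ^ 2 := by
      rw [hrefl b₂, dr_aux_sq u hu]
      simp
    have hn21 : ‖b₂ - b₁‖ = ‖b₁ - b₂‖ := norm_sub_rev _ _
    have key : ‖x n - (2 * ⟪x n, u⟫) • u - b₁‖ ^ 2 - ‖x n - (2 * ⟪x n, u⟫) • u - b₂‖ ^ 2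
        = -(2 * D) * (β + (⟪x n, u⟫ + β₂)) := by
      rw [e1, e2, hinner21, hn21, hinn]
      nlinarith [hβprod]
    apply (hx n).1
    apply lt_of_pow_lt_pow_left₀ 2 (norm_nonneg _)
    nlinarith [key, hDpos]
  -- the inner products ξ₀ bounds from hx1
  have hx0bounds : β < ξ0 ∧ ξ0 ≤ β - β₁ + β₂ := by
    rcases hx1 with ⟨h1, hl, hr⟩ | ⟨h2, hl, hr⟩
    · have : ⟪x 1, u⟫ = ξ0 + β₁ := by rw [h1, hx_inner, hβ₁]
      rw [this] at hl hr
      constructor <;> linarith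
    · have : ⟪x 1, u⟫ = ξ0 + β₂ := by rw [h2, hx_inner, hβ₂]
      rw [this] at hl hr
      constructor <;> linarith
  have f0 : ⌊(-ξ0 + β - ((0 : ℕ) + 1 : ℝ) * β₁ + β₂) / D⌋ = 0 := by
    apply fchar 0 0
    · push_cast; ring
    · exact hx0bounds.1
    · exact hx0bounds.2
  -- the main invariant + formula induction
  have main : ∀ n : ℕ, 1 ≤ n →
      ((x n = ⟪x (n - 1), u⟫ • u + b₁ ∧ β < ⟪x n, u⟫ ∧ ⟪x n, u⟫ ≤ β + β₂) ∨
       (x n = ⟪x (n - 1), u⟫ • u + b₂ ∧ β + β₂ < ⟪x n, u⟫ ∧ ⟪x n, u⟫ ≤ β - β₁ + β₂)) ∧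
      ⟪x n, u⟫ = ξ0 + (n : ℝ) * β₁ +
        (⌊(-ξ0 + β - ((n : ℝ) + 1) * β₁ + β₂) / D⌋ : ℝ) * D := by
    intro n hn
    induction n with
    | zero => omega
    | succ n ih =>
      rcases Nat.eq_zero_or_pos n with hn0 | hn1
      · -- base case: n + 1 = 1
        subst hn0
        rcases hx1 with ⟨h1, hl, hr⟩ | ⟨h2, hl, hr⟩
        · have hi : ⟪x 1, u⟫ = ξ0 + β₁ := by rw [h1, hx_inner, hβ₁]
          refine ⟨Or.inl ⟨h1, hl, hr⟩, ?_⟩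
          have hf := fchar 1 0 (by push_cast; rw [hi]; ring) hl (by linarith)
          rw [hf]
          push_cast
          rw [hi]; ring
        · have hi : ⟪x 1, u⟫ = ξ0 + β₂ := by rw [h2, hx_inner, hβ₂]
          refine ⟨Or.inr ⟨h2, hl, hr⟩, ?_⟩
          have hf := fchar 1 1 (by push_cast; rw [hi, hDdef]; ring) (by linarith) hr
          rw [hf]
          push_cast
          rw [hi, hDdef]; ring
      · obtain ⟨hinv, hform⟩ := ih hn1
        set m : ℤ := ⌊(-ξ0 + β - ((n : ℝ) + 1) * β₁ + β₂) / D⌋ with hm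
        have hsub : (n + 1) - 1 = n := rfl
        rcases hinv with ⟨h1, hl, hr⟩ | ⟨h2, hl, hr⟩
        · by_cases hc : β - β₁ < ⟪x n, u⟫
          · have hstep := (choose1 n _ h1).1 hc
            have hi : ⟪x (n + 1), u⟫ = ⟪x n, u⟫ + β₁ := by rw [hstep, hx_inner, hβ₁]
            refine ⟨Or.inl ⟨by rw [hsub]; exact hstep, by linarith, by linarith⟩, ?_⟩
            have hf := fchar (n + 1) m
              (by push_cast; rw [hi, hform]; push_cast; ring)
              (by linarith) (by linarith)
            rw [hf]
            push_cast
            rw [hi, hform]; push_cast; ring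
          · push_neg at hc
            have hstep := (choose1 n _ h1).2 hc
            have hi : ⟪x (n + 1), u⟫ = ⟪x n, u⟫ + β₂ := by rw [hstep, hx_inner, hβ₂]
            refine ⟨Or.inr ⟨by rw [hsub]; exact hstep, by linarith, by linarith⟩, ?_⟩
            have hf := fchar (n + 1) (m + 1)
              (by push_cast; rw [hi, hform, hDdef]; push_cast; ring)
              (by linarith) (by linarith)
            rw [hf]
            push_cast
            rw [hi, hform, hDdef]; push_cast; ring
        · have hc : -β - β₂ < ⟪x n, u⟫ := by linarith
          have hstep := choose2 n _ h2 hc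
          have hi : ⟪x (n + 1), u⟫ = ⟪x n, u⟫ + β₁ := by rw [hstep, hx_inner, hβ₁]
          refine ⟨Or.inl ⟨by rw [hsub]; exact hstep, by linarith, by linarith⟩, ?_⟩
          have hf := fchar (n + 1) m
            (by push_cast; rw [hi, hform]; push_cast; ring)
            (by linarith) (by linarith)
          rw [hf]
          push_cast
          rw [hi, hform]; push_cast; ring
  -- formula also for n = 0 style access: floor at (n-1)+1 equals floor at n
  have formula : ∀ n : ℕ, ⟪x n, u⟫ = ξ0 + (n : ℝ) * β₁ +
      (⌊(-ξ0 + β - ((n : ℝ) + 1) * β₁ + β₂) / D⌋ : ℝ) * D := by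
    intro n
    rcases Nat.eq_zero_or_pos n with h0 | h1
    · subst h0
      have := f0
      push_cast at this ⊢
      rw [this]
      push_cast; ring
    · exact (main n h1).2
  -- conclusion
  intro n hn
  obtain ⟨hinv, hform⟩ := main n hn
  refine ⟨hform, ?_⟩
  have hcast : ((n - 1 : ℕ) : ℝ) + 1 = (n : ℝ) := by
    rw [Nat.cast_sub hn]; push_cast; ring
  have hformprev := formula (n - 1)
  rw [hcast] at hformprev
  set F1 : ℤ := ⌊(-ξ0 + β - ((n : ℝ) + 1) * β₁ + β₂) / D⌋ with hF1
  set F0 : ℤ := ⌊(-ξ0 + β - (n : ℝ) * β₁ + β₂) / D⌋ with hF0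
  have hcast2 : ((n - 1 : ℕ) : ℝ) = (n : ℝ) - 1 := by
    rw [Nat.cast_sub hn]; push_cast; ring
  rcases hinv with ⟨h1, hl, hr⟩ | ⟨h2, hl, hr⟩
  · -- step used b₁ : F1 = F0, k = 1
    have hi : ⟪x n, u⟫ = ⟪x (n - 1), u⟫ + β₁ := by rw [h1, hx_inner, hβ₁]
    have hFeq : (F1 : ℝ) * D = (F0 : ℝ) * D := by
      rw [hi, hformprev, hcast2] at hform
      linarith
    have hF : F1 = F0 := by
      have : (F1 : ℝ) = (F0 : ℝ) := by
        field_simp at hFeq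
        linarith
      exact_mod_cast this
    refine ⟨F1 - F0 + 1, rfl, Or.inl (by rw [hF]; ring), ?_⟩
    rw [if_pos (by rw [hF]; ring)]
    exact h1
  · -- step used b₂ : F1 = F0 + 1, k = 2
    have hi : ⟪x n, u⟫ = ⟪x (n - 1), u⟫ + β₂ := by rw [h2, hx_inner, hβ₂]
    have hFeq : (F1 : ℝ) * D = (F0 : ℝ) * D + D := by
      rw [hi, hformprev, hcast2] at hform
      rw [hDdef] at hform ⊢
      linarith
    have hF : F1 = F0 + 1 := by
      have : (F1 : ℝ) = (F0 : ℝ) + 1 := by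
        have hD' : D ≠ 0 := ne_of_gt hDpos
        field_simp at hFeq
        nlinarith [hFeq, hDpos]
      exact_mod_cast this
    refine ⟨F1 - F0 + 1, rfl, Or.inr (by rw [hF]; ring), ?_⟩
    rw [if_neg (by rw [hF]; intro h; omega)]
    exact h2
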